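/- arXiv:1804.05412 — 5 statements merged into one kernel-verified Lean document; each statement's English description precedes it below -/
import Mathlib

section
/- Let V be a real vector space with complex structures I₊, I₋, an alternating bilinear form F, and a bivector Q viewed as a map Q: V* → V, such that I₊ - I₋ = Q ∘ F (equation ★1) and F(I₊u,v) + F(u,I₋v) = 0 (equation ★2). Define g(u,v) := -½ F((I₊+I₋)u, v). Then g is symmetric: g(u,v) = g(v,u) for all u, v. -/
/-- Given complex structures `I₊, I₋`, an alternating form `F`, and a skew
map `Q : V* → V` with `I₊ - I₋ = Q F` (★1) and `F I₊ + I₋* F = 0` (★2), the tensor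
`g(u,v) := -½ F((I₊+I₋)u, v)` is symmetric. -/
theorem stmt_2 {V : Type*} [AddCommGroup V] [Module ℝ V]
    (Ip Im : V →ₗ[ℝ] V) (hIp : ∀ v, Ip (Ip v) = -v) (hIm : ∀ v, Im (Im v) = -v)
    (F : LinearMap.BilinForm ℝ V) (hFalt : ∀ u v, F u v = -F v u)
    (Q : Module.Dual ℝ V →ₗ[ℝ] V)
    (hQ : ∀ ξ η : Module.Dual ℝ V, η (Q ξ) = - ξ (Q η))
    (hstar1 : ∀ v, Ip v - Im v = Q (F v))
    (hstar2 : ∀ u v, F (Ip u) v = - F u (Im v))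
    (g : V → V → ℝ) (hg : ∀ u v, g u v = -(1/2) * F (Ip u + Im u) v) :
    ∀ u v, g u v = g v u := by
  intro u v
  have h1 : F (Ip u) v = F (Im v) u := by rw [hstar2 u v, hFalt (Im v) u]
  have h2 : F (Im u) v = F (Ip v) u := by rw [hstar2 v u, hFalt (Im u) v]
  rw [hg u v, hg v u, map_add, map_add, LinearMap.add_apply, LinearMap.add_apply,
    h1, h2]
  ring
end

section
/- Let (V, ω) be a real symplectic vector space, I a complex structure on V that is compatible in the sense that ω(Iu, Iv) = ω(u,v) and set B(u,v) := ω(Iu, v) (so that Ω = B + iω is the associated (2,0)-form data). Suppose L ⊂ V is a Lagrangian subspace for ω, and K₊, K₋ ⊂ V are I-invariant Lagrangian subspaces with K₊ and K₋ mutually symplectic orthogonal, and V = L ⊕ K₊ = L ⊕ K₋. Write, for u ∈ L, Iu = I₊u + k₊u with I₊u ∈ L, k₊u ∈ K₊, and Iu = I₋u + k₋u with I₋u ∈ L, k₋u ∈ K₋. Then B(I₊u, v) = B(I₋v, u) for all u, v ∈ L. -/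
/-- Let `(V, ω)` be symplectic, `I` a compatible complex structure,
`B(u,v) = ω(Iu,v)`, `L` a Lagrangian, `K₊, K₋` I-invariant Lagrangians that are
mutually symplectic orthogonal with `V = L ⊕ K₊ = L ⊕ K₋`.  Writing
`Iu = I₊u + k₊u = I₋u + k₋u` for `u ∈ L` (components in `L` and `K±`), we have
`B(I₊u, v) = B(I₋v, u)` for all `u, v ∈ L`. -/
theorem stmt_4 {V : Type*} [AddCommGroup V] [Module ℝ V]
    (ω : LinearMap.BilinForm ℝ V) (halt : ∀ v, ω v v = 0)
    (I : V →ₗ[ℝ] V) (hI2 : ∀ v, I (I v) = -v)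
    (hcompat : ∀ u v, ω (I u) (I v) = ω u v)
    (L Kp Km : Submodule ℝ V)
    (hLlag : ∀ u ∈ L, ∀ v ∈ L, ω u v = 0)
    (hKpI : ∀ k ∈ Kp, I k ∈ Kp) (hKmI : ∀ k ∈ Km, I k ∈ Km)
    (hKplag : ∀ u ∈ Kp, ∀ v ∈ Kp, ω u v = 0)
    (hKmlag : ∀ u ∈ Km, ∀ v ∈ Km, ω u v = 0)
    (horth : ∀ kp ∈ Kp, ∀ km ∈ Km, ω kp km = 0)
    (hcp : IsCompl L Kp) (hcm : IsCompl L Km)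
    (Ip Imn kp km : V → V)
    (hdecp : ∀ u ∈ L, I u = Ip u + kp u ∧ Ip u ∈ L ∧ kp u ∈ Kp)
    (hdecm : ∀ u ∈ L, I u = Imn u + km u ∧ Imn u ∈ L ∧ km u ∈ Km)
    (B : V → V → ℝ) (hB : ∀ u v, B u v = ω (I u) v) :
    ∀ u ∈ L, ∀ v ∈ L, B (Ip u) v = B (Imn v) u := by
  intro u hu v hv
  have hskew : ∀ a b : V, ω a b = -ω b a := by
    intro a b
    have h := halt (a + b)
    simp only [map_add, LinearMap.add_apply] at h
    rw [halt a, halt b] at h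
    linarith
  obtain ⟨hu1, hu2, hu3⟩ := hdecp u hu
  obtain ⟨hv1, hv2, hv3⟩ := hdecm v hv
  -- key: expand ω(Iu, Iv) = ω(u,v) = 0
  have hkey : ω (Ip u) (km v) = ω (Imn v) (kp u) := by
    have h0 : ω (I u) (I v) = 0 := by rw [hcompat]; exact hLlag u hu v hv
    rw [hu1, hv1] at h0
    simp only [map_add, LinearMap.add_apply] at h0
    rw [hLlag _ hu2 _ hv2, horth _ hu3 _ hv3] at h0
    have := hskew (kp u) (Imn v)
    linarith
  -- B (Ip u) v = -ω (Ip u) (km v)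
  have hBp : B (Ip u) v = -ω (Ip u) (km v) := by
    rw [hB]
    have : ω (I (Ip u)) v = ω (I (I (Ip u))) (I v) := (hcompat _ _).symm
    rw [this, hI2, hv1]
    simp only [map_neg, map_add, LinearMap.neg_apply, LinearMap.add_apply]
    rw [hLlag _ hu2 _ hv2]
    ring
  have hBm : B (Imn v) u = -ω (Imn v) (kp u) := by
    rw [hB]
    have : ω (I (Imn v)) u = ω (I (I (Imn v))) (I u) := (hcompat _ _).symm
    rw [this, hI2, hu1]
    simp only [map_neg, map_add, LinearMap.neg_apply, LinearMap.add_apply]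
    rw [hLlag _ hv2 _ hu2]
    ring
  rw [hBp, hBm, hkey]
end

section
/- On ℂ² with coordinates (a,b,x,y), the map t(a,b,x,y) = (eᵃx, y + xb) and s(a,b,x,y) = (x,y) satisfy: pulling back the meromorphic 2-form ω = (1/x) dx ∧ dy gives t*ω - s*ω = da ∧ d(y + xb) - db ∧ dx; in particular t*ω - s*ω extends to a holomorphic (hence globally defined) 2-form on all of ℂ⁴ and this 2-form is a (complex) symplectic form (closed and nondegenerate). -/
open Complex

/-- The 2-form `da ∧ d(y + xb) - db ∧ dx` on `ℂ⁴`, evaluated at the point `p` on a pair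
of tangent vectors `v, w`.  Coordinates: `0 ↦ a, 1 ↦ b, 2 ↦ x, 3 ↦ y`. -/
noncomputable def Om6 (p v w : Fin 4 → ℂ) : ℂ :=
  v 0 * (w 3 + p 1 * w 2 + p 2 * w 1) - w 0 * (v 3 + p 1 * v 2 + p 2 * v 1)
    - (v 1 * w 2 - w 1 * v 2)

lemma fderiv_Om6 (v w p u : Fin 4 → ℂ) :
    fderiv ℝ (fun q => Om6 q v w) p u
      = u 1 * (v 0 * w 2 - w 0 * v 2) + u 2 * (v 0 * w 1 - w 0 * v 1) := by
  have h1 : HasFDerivAt (fun q : Fin 4 → ℂ => q 1)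
      (ContinuousLinearMap.proj (R := ℝ) (φ := fun _ : Fin 4 => ℂ) 1) p :=
    (ContinuousLinearMap.proj (R := ℝ) (φ := fun _ : Fin 4 => ℂ) 1).hasFDerivAt
  have h2 : HasFDerivAt (fun q : Fin 4 → ℂ => q 2)
      (ContinuousLinearMap.proj (R := ℝ) (φ := fun _ : Fin 4 => ℂ) 2) p :=
    (ContinuousLinearMap.proj (R := ℝ) (φ := fun _ : Fin 4 => ℂ) 2).hasFDerivAt
  have h : HasFDerivAt (fun q : Fin 4 → ℂ => Om6 q v w)
      ((v 0 * w 2 - w 0 * v 2) • ContinuousLinearMap.proj (R := ℝ) (φ := fun _ : Fin 4 => ℂ) 1 +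
        (v 0 * w 1 - w 0 * v 1) • ContinuousLinearMap.proj (R := ℝ) (φ := fun _ : Fin 4 => ℂ) 2) p := by
    have := ((h1.mul_const (v 0 * w 2 - w 0 * v 2)).add
      (h2.mul_const (v 0 * w 1 - w 0 * v 1))).add_const
        (v 0 * w 3 - w 0 * v 3 - (v 1 * w 2 - w 1 * v 2))
    exact this.congr_of_eventuallyEq (Filter.Eventually.of_forall fun q => by
      simp only [Om6, Pi.add_apply]
      ring)
  rw [h.fderiv]
  simp [smul_eq_mul]
  ring

/-- With `t(a,b,x,y) = (eᵃx, y+xb)`, `s(a,b,x,y) = (x,y)`, and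
`ω = (1/x) dx ∧ dy`, the pullback identity
`t*ω - s*ω = da ∧ d(y+xb) - db ∧ dx` holds on `{x ≠ 0}`, and the right-hand side
extends to all of `ℂ⁴` as a closed and nondegenerate (complex symplectic) 2-form. -/
theorem stmt_6 :
    (∀ p v w : Fin 4 → ℂ, p 2 ≠ 0 →
      (1 / (Complex.exp (p 0) * p 2)) *
          ((Complex.exp (p 0) * (p 2 * v 0 + v 2)) * (w 3 + p 1 * w 2 + p 2 * w 1)
            - (Complex.exp (p 0) * (p 2 * w 0 + w 2)) * (v 3 + p 1 * v 2 + p 2 * v 1))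
        - (1 / p 2) * (v 2 * w 3 - w 2 * v 3) = Om6 p v w)
    ∧ (∀ p v₀ v₁ v₂ : Fin 4 → ℂ,
        fderiv ℝ (fun q => Om6 q v₁ v₂) p v₀ - fderiv ℝ (fun q => Om6 q v₀ v₂) p v₁
          + fderiv ℝ (fun q => Om6 q v₀ v₁) p v₂ = 0)
    ∧ (∀ p v : Fin 4 → ℂ, (∀ w, Om6 p v w = 0) → v = 0) := by
  refine ⟨fun p v w hx => ?_, fun p v₀ v₁ v₂ => ?_, fun p v hv => ?_⟩
  · have he : Complex.exp (p 0) ≠ 0 := Complex.exp_ne_zero _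
    field_simp [Om6]
    unfold Om6
    ring
  · rw [fderiv_Om6, fderiv_Om6, fderiv_Om6]
    ring
  · have h0 := hv (fun i => if i = 3 then 1 else 0)
    have h1 := hv (fun i => if i = 0 then 1 else 0)
    have h2 := hv (fun i => if i = 1 then 1 else 0)
    have h3 := hv (fun i => if i = 2 then 1 else 0)
    simp [Om6] at h0 h1 h2 h3
    funext i
    fin_cases i <;> simp_all
end

section
/- Let K : ℂ² → ℝ be K(q₁,q₂) = q₁q̄₁ + q₂q̄₂. Then the 2-form F = i ∂∂̄K equals i(dq₁∧dq̄₁ + dq₂∧dq̄₂), and for the map s(q₁,q₂) = (q₂, q₁ - i|q₂|²) from ℂ² to ℂ², the (1,1)-part of F with respect to the complex structure pulled back by s satisfies F^{(1,1)_-} ∧ F^{(1,1)_-} = -2(1 - |q₂|²) dq₁∧dq̄₁∧dq₂∧dq̄₂. In particular this 4-form vanishes exactly on the set |q₂| = 1. -/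
open Complex

/-- `K(q₁,q₂) = q₁q̄₁ + q₂q̄₂`, viewed as a complex-valued function on `ℂ²`. -/
noncomputable def K9 (p : ℂ × ℂ) : ℂ :=
  p.1 * (starRingEnd ℂ) p.1 + p.2 * (starRingEnd ℂ) p.2

/-- Wirtinger derivative `∂/∂q₁`. -/
noncomputable def W1 (f : ℂ × ℂ → ℂ) (p : ℂ × ℂ) : ℂ :=
  (fderiv ℝ f p (1, 0) - Complex.I * fderiv ℝ f p (Complex.I, 0)) / 2

/-- Wirtinger derivative `∂/∂q̄₁`. -/
noncomputable def W1bar (f : ℂ × ℂ → ℂ) (p : ℂ × ℂ) : ℂ :=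
  (fderiv ℝ f p (1, 0) + Complex.I * fderiv ℝ f p (Complex.I, 0)) / 2

/-- Wirtinger derivative `∂/∂q₂`. -/
noncomputable def W2 (f : ℂ × ℂ → ℂ) (p : ℂ × ℂ) : ℂ :=
  (fderiv ℝ f p (0, 1) - Complex.I * fderiv ℝ f p (0, Complex.I)) / 2

/-- Wirtinger derivative `∂/∂q̄₂`. -/
noncomputable def W2bar (f : ℂ × ℂ → ℂ) (p : ℂ × ℂ) : ℂ :=
  (fderiv ℝ f p (0, 1) + Complex.I * fderiv ℝ f p (0, Complex.I)) / 2

/-- The 2-form `F = i(dq₁∧dq̄₁ + dq₂∧dq̄₂)` on `ℂ²`. -/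
noncomputable def F9 (v w : ℂ × ℂ) : ℂ :=
  Complex.I * ((v.1 * (starRingEnd ℂ) w.1 - w.1 * (starRingEnd ℂ) v.1)
    + (v.2 * (starRingEnd ℂ) w.2 - w.2 * (starRingEnd ℂ) v.2))

/-- The (real) differential of `s(q₁,q₂) = (q₂, q₁ - i q₂ q̄₂)` at the point `p`. -/
noncomputable def Ds9 (p v : ℂ × ℂ) : ℂ × ℂ :=
  (v.2, v.1 - Complex.I * (v.2 * (starRingEnd ℂ) p.2 + p.2 * (starRingEnd ℂ) v.2))

/-- The (1,1)-component of `F9` with respect to the complex structure `Iminus`. -/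
noncomputable def F11 (Iminus : ℂ × ℂ → (ℂ × ℂ) → ℂ × ℂ) (p v w : ℂ × ℂ) : ℂ :=
  (F9 v w + F9 (Iminus p v) (Iminus p w)) / 2

/-- Wedge product of two 2-forms, evaluated on four vectors. -/
noncomputable def wedge4 (B C : (ℂ × ℂ) → (ℂ × ℂ) → ℂ) (v₁ v₂ v₃ v₄ : ℂ × ℂ) : ℂ :=
  B v₁ v₂ * C v₃ v₄ - B v₁ v₃ * C v₂ v₄ + B v₁ v₄ * C v₂ v₃
    + B v₂ v₃ * C v₁ v₄ - B v₂ v₄ * C v₁ v₃ + B v₃ v₄ * C v₁ v₂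

/-- The 4-form `dq₁∧dq̄₁∧dq₂∧dq̄₂` evaluated on four vectors. -/
noncomputable def vol9 (v₁ v₂ v₃ v₄ : ℂ × ℂ) : ℂ :=
  Matrix.det
    !![v₁.1, (starRingEnd ℂ) v₁.1, v₁.2, (starRingEnd ℂ) v₁.2;
       v₂.1, (starRingEnd ℂ) v₂.1, v₂.2, (starRingEnd ℂ) v₂.2;
       v₃.1, (starRingEnd ℂ) v₃.1, v₃.2, (starRingEnd ℂ) v₃.2;
       v₄.1, (starRingEnd ℂ) v₄.1, v₄.2, (starRingEnd ℂ) v₄.2]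


noncomputable def conjL9 : ℂ →L[ℝ] ℂ := Complex.conjCLE.toContinuousLinearMap

lemma hasFDerivK9 (p : ℂ × ℂ) :
    HasFDerivAt K9
      ((p.1 • (conjL9.comp (ContinuousLinearMap.fst ℝ ℂ ℂ))
        + (starRingEnd ℂ) p.1 • ContinuousLinearMap.fst ℝ ℂ ℂ)
        + (p.2 • (conjL9.comp (ContinuousLinearMap.snd ℝ ℂ ℂ))
        + (starRingEnd ℂ) p.2 • ContinuousLinearMap.snd ℝ ℂ ℂ)) p := by
  have h1 : HasFDerivAt (fun q : ℂ × ℂ => q.1) (ContinuousLinearMap.fst ℝ ℂ ℂ) p :=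
    hasFDerivAt_fst
  have h2 : HasFDerivAt (fun q : ℂ × ℂ => q.2) (ContinuousLinearMap.snd ℝ ℂ ℂ) p :=
    hasFDerivAt_snd
  have h1c : HasFDerivAt (fun q : ℂ × ℂ => (starRingEnd ℂ) q.1)
      (conjL9.comp (ContinuousLinearMap.fst ℝ ℂ ℂ)) p :=
    (conjL9.hasFDerivAt).comp p h1
  have h2c : HasFDerivAt (fun q : ℂ × ℂ => (starRingEnd ℂ) q.2)
      (conjL9.comp (ContinuousLinearMap.snd ℝ ℂ ℂ)) p :=
    (conjL9.hasFDerivAt).comp p h2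
  exact (h1.mul h1c).add (h2.mul h2c)

lemma W1barK9 : (fun q => W1bar K9 q) = fun q : ℂ × ℂ => q.1 := by
  funext q
  simp only [W1bar, (hasFDerivK9 q).fderiv]
  simp [conjL9, smul_eq_mul, Complex.conjCLE_apply, map_one, map_zero, Complex.conj_I]
  ring_nf
  rw [Complex.I_sq]
  ring

lemma W2barK9 : (fun q => W2bar K9 q) = fun q : ℂ × ℂ => q.2 := by
  funext q
  simp only [W2bar, (hasFDerivK9 q).fderiv]
  simp [conjL9, smul_eq_mul, Complex.conjCLE_apply, map_one, map_zero, Complex.conj_I]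
  ring_nf
  rw [Complex.I_sq]
  ring

lemma fderiv_fst9 (p : ℂ × ℂ) :
    fderiv ℝ (fun q : ℂ × ℂ => q.1) p = ContinuousLinearMap.fst ℝ ℂ ℂ :=
  (hasFDerivAt_fst (𝕜 := ℝ) (p := p)).fderiv

lemma fderiv_snd9 (p : ℂ × ℂ) :
    fderiv ℝ (fun q : ℂ × ℂ => q.2) p = ContinuousLinearMap.snd ℝ ℂ ℂ :=
  (hasFDerivAt_snd (𝕜 := ℝ) (p := p)).fderiv

lemma Iexpl9 (Iminus : ℂ × ℂ → (ℂ × ℂ) → ℂ × ℂ)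
    (hI : ∀ p v, Ds9 p (Iminus p v) =
      (Complex.I * (Ds9 p v).1, Complex.I * (Ds9 p v).2)) (p v : ℂ × ℂ) :
    Iminus p v = (Complex.I * v.1 + 2 * p.2 * (starRingEnd ℂ) v.2, Complex.I * v.2) := by
  have h := hI p v
  simp only [Ds9, Prod.mk.injEq] at h
  obtain ⟨h1, h2⟩ := h
  have h1c := congrArg (starRingEnd ℂ) h1
  simp only [map_mul, Complex.conj_I] at h1c
  refine Prod.ext ?_ h1
  simp only
  rw [h1] at h2
  simp only [map_mul, Complex.conj_I] at h2
  linear_combination h2 - 2 * p.2 * (starRingEnd ℂ) v.2 * Complex.I_sq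

lemma F11expl9 (Iminus : ℂ × ℂ → (ℂ × ℂ) → ℂ × ℂ)
    (hI : ∀ p v, Ds9 p (Iminus p v) =
      (Complex.I * (Ds9 p v).1, Complex.I * (Ds9 p v).2)) (p v w : ℂ × ℂ) :
    F11 Iminus p v w =
      Complex.I * (v.1 * (starRingEnd ℂ) w.1 - w.1 * (starRingEnd ℂ) v.1)
      + Complex.I * (1 - 2 * (p.2 * (starRingEnd ℂ) p.2))
          * (v.2 * (starRingEnd ℂ) w.2 - w.2 * (starRingEnd ℂ) v.2)
      + (starRingEnd ℂ) p.2 * (v.2 * w.1 - w.2 * v.1)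
      + p.2 * ((starRingEnd ℂ) v.2 * (starRingEnd ℂ) w.1
          - (starRingEnd ℂ) w.2 * (starRingEnd ℂ) v.1) := by
  rw [F11, Iexpl9 Iminus hI p v, Iexpl9 Iminus hI p w]
  simp only [F9, map_add, map_mul, Complex.conj_I, Complex.conj_conj, map_ofNat]
  linear_combination (Complex.I * (v.1 * (starRingEnd ℂ) w.1 - w.1 * (starRingEnd ℂ) v.1
    + (v.2 * (starRingEnd ℂ) w.2 - w.2 * (starRingEnd ℂ) v.2))
    + (-3/2 : ℂ) * Complex.I * (v.1 * (starRingEnd ℂ) w.1 - w.1 * (starRingEnd ℂ) v.1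
      + v.2 * (starRingEnd ℂ) w.2 - w.2 * (starRingEnd ℂ) v.2)
    + (v.1 * w.2 * (starRingEnd ℂ) p.2 - w.1 * v.2 * (starRingEnd ℂ) p.2
      - (starRingEnd ℂ) w.1 * (starRingEnd ℂ) v.2 * p.2
      + (starRingEnd ℂ) v.1 * (starRingEnd ℂ) w.2 * p.2)) * Complex.I_sq

lemma vol9expl (v₁ v₂ v₃ v₄ : ℂ × ℂ) : vol9 v₁ v₂ v₃ v₄ =
      (0
      + v₁.1 * (starRingEnd ℂ) v₂.1 * v₃.2 * (starRingEnd ℂ) v₄.2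
      - v₁.1 * (starRingEnd ℂ) v₂.1 * (starRingEnd ℂ) v₃.2 * v₄.2
      - v₁.1 * v₂.2 * (starRingEnd ℂ) v₃.1 * (starRingEnd ℂ) v₄.2
      + v₁.1 * v₂.2 * (starRingEnd ℂ) v₃.2 * (starRingEnd ℂ) v₄.1
      + v₁.1 * (starRingEnd ℂ) v₂.2 * (starRingEnd ℂ) v₃.1 * v₄.2
      - v₁.1 * (starRingEnd ℂ) v₂.2 * v₃.2 * (starRingEnd ℂ) v₄.1
      - (starRingEnd ℂ) v₁.1 * v₂.1 * v₃.2 * (starRingEnd ℂ) v₄.2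
      + (starRingEnd ℂ) v₁.1 * v₂.1 * (starRingEnd ℂ) v₃.2 * v₄.2
      + (starRingEnd ℂ) v₁.1 * v₂.2 * v₃.1 * (starRingEnd ℂ) v₄.2
      - (starRingEnd ℂ) v₁.1 * v₂.2 * (starRingEnd ℂ) v₃.2 * v₄.1
      - (starRingEnd ℂ) v₁.1 * (starRingEnd ℂ) v₂.2 * v₃.1 * v₄.2
      + (starRingEnd ℂ) v₁.1 * (starRingEnd ℂ) v₂.2 * v₃.2 * v₄.1
      + v₁.2 * v₂.1 * (starRingEnd ℂ) v₃.1 * (starRingEnd ℂ) v₄.2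
      - v₁.2 * v₂.1 * (starRingEnd ℂ) v₃.2 * (starRingEnd ℂ) v₄.1
      - v₁.2 * (starRingEnd ℂ) v₂.1 * v₃.1 * (starRingEnd ℂ) v₄.2
      + v₁.2 * (starRingEnd ℂ) v₂.1 * (starRingEnd ℂ) v₃.2 * v₄.1
      + v₁.2 * (starRingEnd ℂ) v₂.2 * v₃.1 * (starRingEnd ℂ) v₄.1
      - v₁.2 * (starRingEnd ℂ) v₂.2 * (starRingEnd ℂ) v₃.1 * v₄.1
      - (starRingEnd ℂ) v₁.2 * v₂.1 * (starRingEnd ℂ) v₃.1 * v₄.2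
      + (starRingEnd ℂ) v₁.2 * v₂.1 * v₃.2 * (starRingEnd ℂ) v₄.1
      + (starRingEnd ℂ) v₁.2 * (starRingEnd ℂ) v₂.1 * v₃.1 * v₄.2
      - (starRingEnd ℂ) v₁.2 * (starRingEnd ℂ) v₂.1 * v₃.2 * v₄.1
      - (starRingEnd ℂ) v₁.2 * v₂.2 * v₃.1 * (starRingEnd ℂ) v₄.1
      + (starRingEnd ℂ) v₁.2 * v₂.2 * (starRingEnd ℂ) v₃.1 * v₄.1) := by
  rw [vol9]
  simp [Matrix.det_succ_row_zero, Fin.sum_univ_succ,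
    show Fin.succAbove (2 : Fin 4) (2 : Fin 3) = 3 from rfl,
    show Fin.succAbove (3 : Fin 4) (2 : Fin 3) = 2 from rfl,
    show Fin.succAbove (1 : Fin 4) (2 : Fin 3) = 3 from rfl]
  ring


/-- with `K = |q₁|² + |q₂|²`, the form `F = i∂∂̄K` equals
`i(dq₁∧dq̄₁ + dq₂∧dq̄₂)` (mixed Wirtinger derivatives of `K` are `δᵢⱼ`); for the
complex structure `I₋` pulled back by `s(q₁,q₂) = (q₂, q₁ - i|q₂|²)`, the
(1,1)-part of `F` is as computed, and
`F^{(1,1)_-} ∧ F^{(1,1)_-} = -2(1-|q₂|²) dq₁∧dq̄₁∧dq₂∧dq̄₂`, which vanishes exactly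
on `|q₂| = 1`. -/
theorem stmt_9 (Iminus : ℂ × ℂ → (ℂ × ℂ) → ℂ × ℂ)
    (hI : ∀ p v, Ds9 p (Iminus p v) =
      (Complex.I * (Ds9 p v).1, Complex.I * (Ds9 p v).2)) :
    (∀ p : ℂ × ℂ, W1 (fun q => W1bar K9 q) p = 1 ∧ W1 (fun q => W2bar K9 q) p = 0
      ∧ W2 (fun q => W1bar K9 q) p = 0 ∧ W2 (fun q => W2bar K9 q) p = 1)
    ∧ (∀ p v w : ℂ × ℂ,
        F11 Iminus p v w =
          Complex.I * (v.1 * (starRingEnd ℂ) w.1 - w.1 * (starRingEnd ℂ) v.1)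
          + Complex.I * (1 - 2 * (p.2 * (starRingEnd ℂ) p.2))
              * (v.2 * (starRingEnd ℂ) w.2 - w.2 * (starRingEnd ℂ) v.2)
          + (starRingEnd ℂ) p.2 * (v.2 * w.1 - w.2 * v.1)
          + p.2 * ((starRingEnd ℂ) v.2 * (starRingEnd ℂ) w.1
              - (starRingEnd ℂ) w.2 * (starRingEnd ℂ) v.1))
    ∧ (∀ p v₁ v₂ v₃ v₄ : ℂ × ℂ,
        wedge4 (F11 Iminus p) (F11 Iminus p) v₁ v₂ v₃ v₄ =
          -2 * (1 - p.2 * (starRingEnd ℂ) p.2) * vol9 v₁ v₂ v₃ v₄)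
    ∧ (∀ p : ℂ × ℂ, (-2 * (1 - p.2 * (starRingEnd ℂ) p.2) = 0 ↔ ‖p.2‖ = 1)) := by
  refine ⟨fun p => ⟨?_, ?_, ?_, ?_⟩, fun p v w => F11expl9 Iminus hI p v w,
    fun p v₁ v₂ v₃ v₄ => ?_, fun p => ?_⟩
  · rw [W1barK9]; simp [W1, fderiv_fst9, Complex.I_mul_I]
  · rw [W2barK9]; simp [W1, fderiv_snd9]
  · rw [W1barK9]; simp [W2, fderiv_fst9]
  · rw [W2barK9]; simp [W2, fderiv_snd9, Complex.I_mul_I]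
  · rw [wedge4, vol9expl]
    simp only [F11expl9 Iminus hI]
    ring_nf
    simp only [Complex.I_sq]
    ring
  · rw [Complex.mul_conj]
    constructor
    · intro h
      have h2 : (Complex.normSq p.2 : ℂ) = 1 := by linear_combination (1/2 : ℂ) * h
      have h3 : Complex.normSq p.2 = 1 := by exact_mod_cast h2
      rw [← Complex.sq_norm] at h3
      nlinarith [norm_nonneg p.2]
    · intro h
      have h3 : Complex.normSq p.2 = 1 := by rw [← Complex.sq_norm, h]; norm_num
      rw [h3]; norm_num
end

section
/- Let g be the symmetric 2-tensor on ℝ⁴ ≅ ℂ² given in complex coordinates by g = 2(dq₁ dq̄₁ + dq₂ dq̄₂ + i q̄₂ dq₁ dq₂ - i q₂ dq̄₁ dq̄₂) (symmetric products). Then g is positive definite at every point with |q₂| < 1, and is degenerate at every point with |q₂| = 1. -/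
open Complex

/-- The symmetric 2-tensor
`g = 2(dq₁dq̄₁ + dq₂dq̄₂ + i q̄₂ dq₁dq₂ - i q₂ dq̄₁dq̄₂)` on `ℂ²`, evaluated at the
point `p` on tangent vectors `v, w` (symmetric products). -/
noncomputable def g10 (p v w : ℂ × ℂ) : ℂ :=
  (v.1 * (starRingEnd ℂ) w.1 + (starRingEnd ℂ) v.1 * w.1)
    + (v.2 * (starRingEnd ℂ) w.2 + (starRingEnd ℂ) v.2 * w.2)
    + Complex.I * (starRingEnd ℂ) p.2 * (v.1 * w.2 + w.1 * v.2)
    - Complex.I * p.2 * ((starRingEnd ℂ) v.1 * (starRingEnd ℂ) w.2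
        + (starRingEnd ℂ) w.1 * (starRingEnd ℂ) v.2)

lemma g10_re (p v : ℂ × ℂ) :
    (g10 p v v).re = 2 * ‖v.1‖ ^ 2 + 2 * ‖v.2‖ ^ 2
      + 4 * (Complex.I * (starRingEnd ℂ) p.2 * (v.1 * v.2)).re := by
  rw [Complex.sq_norm, Complex.sq_norm]
  simp [g10, Complex.normSq_apply, Complex.mul_re, Complex.mul_im,
    Complex.add_re, Complex.add_im, Complex.sub_re, sq]
  ring

/-- `g` is real and positive definite at every point with `|q₂| < 1`,
and degenerate at every point with `|q₂| = 1`. -/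
theorem stmt_10 :
    ∀ p : ℂ × ℂ,
      (∀ v w : ℂ × ℂ, (g10 p v w).im = 0)
      ∧ (‖p.2‖ < 1 → ∀ v : ℂ × ℂ, v ≠ 0 → 0 < (g10 p v v).re)
      ∧ (‖p.2‖ = 1 → ∃ v : ℂ × ℂ, v ≠ 0 ∧ ∀ w, g10 p v w = 0) := by
  intro p
  refine ⟨?_, ?_, ?_⟩
  · intro v w
    simp [g10, Complex.mul_im, Complex.mul_re, Complex.add_im, Complex.sub_im,
      Complex.add_re]
    ring
  · intro hq v hv
    rw [g10_re]
    set z := Complex.I * (starRingEnd ℂ) p.2 * (v.1 * v.2) with hz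
    have habs : ‖z‖
        = ‖p.2‖ * (‖v.1‖ * ‖v.2‖) := by
      simp [hz, map_mul]
    have hzre : -(‖p.2‖ * (‖v.1‖ * ‖v.2‖)) ≤ z.re := by
      have h1 := Complex.abs_re_le_norm z
      rw [habs] at h1
      cases abs_cases z.re with
      | inl h => nlinarith [h.1, h.2]
      | inr h => nlinarith [h.1, h.2]
    have hvv : v.1 ≠ 0 ∨ v.2 ≠ 0 := by
      by_contra h
      push_neg at h
      exact hv (Prod.ext h.1 h.2)
    have hpos : 0 < ‖v.1‖ ^ 2 + ‖v.2‖ ^ 2 := by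
      cases hvv with
      | inl h =>
        have := norm_pos_iff.mpr h
        nlinarith [sq_nonneg (‖v.2‖)]
      | inr h =>
        have := norm_pos_iff.mpr h
        nlinarith [sq_nonneg (‖v.1‖)]
    have hA : 0 ≤ ‖v.1‖ := norm_nonneg _
    have hB : 0 ≤ ‖v.2‖ := norm_nonneg _
    have hQ : 0 ≤ ‖p.2‖ := norm_nonneg _
    nlinarith [sq_nonneg (‖v.1‖ - ‖v.2‖),
      mul_nonneg hA hB, sq_nonneg (‖v.1‖ + ‖v.2‖)]
  · intro hq
    refine ⟨(Complex.I * p.2, 1), ?_, ?_⟩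
    · intro h
      have := congrArg Prod.snd h
      simp at this
    · intro w
      have hq' : p.2 * (starRingEnd ℂ) p.2 = 1 := by
        rw [Complex.mul_conj]
        norm_cast
        rw [Complex.normSq_eq_norm_sq, hq]; norm_num
      simp only [g10, map_mul, map_one, Complex.conj_I]
      linear_combination (-(w.2) - (starRingEnd ℂ) w.2) * hq'
        + (w.2 + (starRingEnd ℂ) w.2) * p.2 * (starRingEnd ℂ) p.2 * Complex.I_sq
end
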